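/- Let ≿ be the α-maxmin expected utility preference on 𝓕 represented by f ↦ α min_{p∈P₁} ∫ u(f) dp + (1−α) max_{p∈P₂} ∫ u(f) dp, where u : X → ℝ is nonconstant affine with 0 in the interior of u(X), P₁, P₂ ⊆ Δ are nonempty, convex and weak*-compact, and α ∈ [0,1]. Then its maximal family of prior sets satisfies 𝒬* = {Q ⊆ Δ : Q nonempty, convex and weak*-compact, and (1−α)P₂ ⊆ Q − αP₁}, where Q − αP₁ and (1−α)P₂ denote Minkowski operations. -/

import Mathlib

open scoped Pointwise
open MeasureTheory

namespace Paper

variable {S V : Type*}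

/-- An algebra of subsets of `S` (the events `Σ`). -/
structure IsSetAlg (𝓐 : Set (Set S)) : Prop where
  empty_mem : ∅ ∈ 𝓐
  compl_mem : ∀ A ∈ 𝓐, Aᶜ ∈ 𝓐
  union_mem : ∀ A ∈ 𝓐, ∀ B ∈ 𝓐, A ∪ B ∈ 𝓐

/-- `B₀(Σ)`: real-valued `Σ`-measurable simple functions. -/
def IsSimpleFn (𝓐 : Set (Set S)) (φ : S → ℝ) : Prop :=
  (Set.range φ).Finite ∧ ∀ t : ℝ, φ ⁻¹' {t} ∈ 𝓐

open Classical in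
/-- The integral of a simple function with respect to a finitely additive set function. -/
noncomputable def fint (p : Set S → ℝ) (φ : S → ℝ) : ℝ :=
  if h : (Set.range φ).Finite then ∑ t ∈ h.toFinset, t * p (φ ⁻¹' {t}) else 0

/-- `Δ`: the finitely additive probabilities on `Σ` (canonically extended by `0` off `Σ`). -/
def Δset (𝓐 : Set (Set S)) : Set (Set S → ℝ) :=
  {p | p Set.univ = 1 ∧ (∀ A ∈ 𝓐, 0 ≤ p A) ∧
    (∀ A ∈ 𝓐, ∀ B ∈ 𝓐, Disjoint A B → p (A ∪ B) = p A + p B) ∧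
    ∀ A : Set S, A ∉ 𝓐 → p A = 0}

/-- The weak* topology `σ(Δ, B₀(Σ))`, i.e. the topology induced by the evaluation maps
`p ↦ ∫ φ dp`, `φ ∈ B₀(Σ)`. -/
noncomputable def weakStar (𝓐 : Set (Set S)) : TopologicalSpace (Set S → ℝ) :=
  TopologicalSpace.induced
    (fun p => fun φ : {φ : S → ℝ // IsSimpleFn 𝓐 φ} => fint p φ.1)
    Pi.topologicalSpace

/-- `𝒞`: the weak*-lower semicontinuous convex functions `c : Δ → (-∞, ∞]`. -/
def Cscr (𝓐 : Set (Set S)) : Set ((Set S → ℝ) → EReal) :=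
  {c | (∀ p ∈ Δset 𝓐, ⊥ < c p) ∧
    (@LowerSemicontinuousOn (Set S → ℝ) EReal (weakStar 𝓐) _ c (Δset 𝓐)) ∧
    ∀ p ∈ Δset 𝓐, ∀ q ∈ Δset 𝓐, ∀ a b : ℝ, 0 ≤ a → 0 ≤ b → a + b = 1 →
      c (a • p + b • q) ≤ (a : EReal) * c p + (b : EReal) * c q}

/-- A subset `C ⊆ 𝒞` is grounded if `sup_{c ∈ C} min_{p ∈ Δ} c p = 0`. -/
def Grounded (𝓐 : Set (Set S)) (C : Set ((Set S → ℝ) → EReal)) : Prop :=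
  (⨆ c ∈ C, ⨅ p ∈ Δset 𝓐, c p) = 0

/-- `min_{p ∈ Δ} (∫ φ dp + c p)`. -/
noncomputable def minVal (𝓐 : Set (Set S)) (c : (Set S → ℝ) → EReal) (φ : S → ℝ) : EReal :=
  ⨅ p ∈ Δset 𝓐, ((fint p φ : EReal) + c p)

/-- `max_{q ∈ Δ} (∫ φ dq - b q)`. -/
noncomputable def maxVal (𝓐 : Set (Set S)) (b : (Set S → ℝ) → EReal) (φ : S → ℝ) : EReal :=
  ⨆ q ∈ Δset 𝓐, ((fint q φ : EReal) - b q)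

/-- `max_{c ∈ C} min_{p ∈ Δ} (∫ φ dp + c p)`. -/
noncomputable def maxminVal (𝓐 : Set (Set S)) (C : Set ((Set S → ℝ) → EReal))
    (φ : S → ℝ) : EReal :=
  ⨆ c ∈ C, minVal 𝓐 c φ

/-- `min_{b ∈ B} max_{q ∈ Δ} (∫ φ dq - b q)`. -/
noncomputable def minmaxVal (𝓐 : Set (Set S)) (B : Set ((Set S → ℝ) → EReal))
    (φ : S → ℝ) : EReal :=
  ⨅ b ∈ B, maxVal 𝓐 b φ

/-- `min_{p ∈ P} ∫ φ dp`. -/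
noncomputable def minPVal (P : Set (Set S → ℝ)) (φ : S → ℝ) : EReal :=
  ⨅ p ∈ P, (fint p φ : EReal)

/-- `max_{q ∈ Q} ∫ φ dq`. -/
noncomputable def maxQVal (Q : Set (Set S → ℝ)) (φ : S → ℝ) : EReal :=
  ⨆ q ∈ Q, (fint q φ : EReal)

/-- `max_{P ∈ Pfam} min_{p ∈ P} ∫ φ dp`. -/
noncomputable def maxminPVal (Pfam : Set (Set (Set S → ℝ))) (φ : S → ℝ) : EReal :=
  ⨆ P ∈ Pfam, minPVal P φ

/-- `min_{Q ∈ Qfam} max_{q ∈ Q} ∫ φ dq`. -/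
noncomputable def minmaxQVal (Qfam : Set (Set (Set S → ℝ))) (φ : S → ℝ) : EReal :=
  ⨅ Q ∈ Qfam, maxQVal Q φ

open Classical in
/-- The convex-analytic indicator `δ_P` of a set `P`. -/
noncomputable def ind (P : Set (Set S → ℝ)) : (Set S → ℝ) → EReal :=
  fun p => if p ∈ P then (0 : EReal) else ⊤

variable [AddCommGroup V] [Module ℝ V]

/-- `𝓕`: the simple acts, i.e. `Σ`-measurable maps `f : S → X` with finitely many values. -/
def Acts (𝓐 : Set (Set S)) (X : Set V) : Set (S → V) :=
  {f | (∀ s, f s ∈ X) ∧ (Set.range f).Finite ∧ ∀ v : V, f ⁻¹' {v} ∈ 𝓐}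

/-- The constant act with value `x`. -/
def constAct (x : V) : S → V := fun _ : S => x

/-- The mixture `α f + (1 - α) g` of two acts, defined statewise. -/
def mix (α : ℝ) (f g : S → V) : S → V := fun s => α • f s + (1 - α) • g s

/-- The statewise utility `u ∘ f` of an act. -/
def uAct (u : V → ℝ) (f : S → V) : S → ℝ := fun s => u (f s)

/-- `u : X → ℝ` is nonconstant and affine on `X`. -/
def IsNonconstAffine (X : Set V) (u : V → ℝ) : Prop :=
  (∀ x ∈ X, ∀ y ∈ X, ∀ t ∈ Set.Icc (0 : ℝ) 1,
      u (t • x + (1 - t) • y) = t * u x + (1 - t) * u y) ∧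
  ∃ x ∈ X, ∃ y ∈ X, u x ≠ u y

/-- A niveloidal preference: Axioms A1 (weak order), A2 (monotonicity), A3 (Archimedean)
and A4 (weak C-independence). -/
structure NiveloidalPref (𝓐 : Set (Set S)) (X : Set V)
    (R : (S → V) → (S → V) → Prop) : Prop where
  nontrivial : ∃ f ∈ Acts 𝓐 X, ∃ g ∈ Acts 𝓐 X, R f g ∧ ¬ R g f
  complete : ∀ f ∈ Acts 𝓐 X, ∀ g ∈ Acts 𝓐 X, R f g ∨ R g f
  transitive : ∀ f ∈ Acts 𝓐 X, ∀ g ∈ Acts 𝓐 X, ∀ h ∈ Acts 𝓐 X, R f g → R g h → R f h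
  monotone : ∀ f ∈ Acts 𝓐 X, ∀ g ∈ Acts 𝓐 X,
    (∀ s : S, R (constAct (f s)) (constAct (g s))) → R f g
  archimedean : ∀ f ∈ Acts 𝓐 X, ∀ g ∈ Acts 𝓐 X, ∀ h ∈ Acts 𝓐 X,
    (R f g ∧ ¬ R g f) → (R g h ∧ ¬ R h g) →
    ∃ α ∈ Set.Ioo (0 : ℝ) 1, ∃ β ∈ Set.Ioo (0 : ℝ) 1,
      (R (mix α f h) g ∧ ¬ R g (mix α f h)) ∧
      (R g (mix β f h) ∧ ¬ R (mix β f h) g)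
  weakCIndep : ∀ f ∈ Acts 𝓐 X, ∀ g ∈ Acts 𝓐 X, ∀ x ∈ X, ∀ y ∈ X,
    ∀ α ∈ Set.Ioo (0 : ℝ) 1,
    R (mix α f (constAct x)) (mix α g (constAct x)) →
    R (mix α f (constAct y)) (mix α g (constAct y))

/-- An invariant biseparable preference: Axioms A1 (weak order), A2 (monotonicity),
A3 (Archimedean) and A7 (C-independence). -/
structure IBPref (𝓐 : Set (Set S)) (X : Set V)
    (R : (S → V) → (S → V) → Prop) : Prop where
  nontrivial : ∃ f ∈ Acts 𝓐 X, ∃ g ∈ Acts 𝓐 X, R f g ∧ ¬ R g f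
  complete : ∀ f ∈ Acts 𝓐 X, ∀ g ∈ Acts 𝓐 X, R f g ∨ R g f
  transitive : ∀ f ∈ Acts 𝓐 X, ∀ g ∈ Acts 𝓐 X, ∀ h ∈ Acts 𝓐 X, R f g → R g h → R f h
  monotone : ∀ f ∈ Acts 𝓐 X, ∀ g ∈ Acts 𝓐 X,
    (∀ s : S, R (constAct (f s)) (constAct (g s))) → R f g
  archimedean : ∀ f ∈ Acts 𝓐 X, ∀ g ∈ Acts 𝓐 X, ∀ h ∈ Acts 𝓐 X,
    (R f g ∧ ¬ R g f) → (R g h ∧ ¬ R h g) →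
    ∃ α ∈ Set.Ioo (0 : ℝ) 1, ∃ β ∈ Set.Ioo (0 : ℝ) 1,
      (R (mix α f h) g ∧ ¬ R g (mix α f h)) ∧
      (R g (mix β f h) ∧ ¬ R (mix β f h) g)
  cIndep : ∀ f ∈ Acts 𝓐 X, ∀ g ∈ Acts 𝓐 X, ∀ x ∈ X, ∀ α ∈ Set.Ioo (0 : ℝ) 1,
    (R f g ↔ R (mix α f (constAct x)) (mix α g (constAct x)))

/-- Axiom A5 (uncertainty aversion). -/
def UncertaintyAverse (𝓐 : Set (Set S)) (X : Set V)
    (R : (S → V) → (S → V) → Prop) : Prop :=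
  ∀ f ∈ Acts 𝓐 X, ∀ g ∈ Acts 𝓐 X, ∀ α ∈ Set.Ioo (0 : ℝ) 1,
    R f g → R g f → R (mix α f g) f

/-- `xf` assigns to every act a certainty equivalent. -/
def IsCE (𝓐 : Set (Set S)) (X : Set V) (R : (S → V) → (S → V) → Prop)
    (xf : (S → V) → V) : Prop :=
  ∀ f ∈ Acts 𝓐 X, xf f ∈ X ∧ R f (constAct (xf f)) ∧ R (constAct (xf f)) f

/-- `C*`: the maximal candidate set of penalty functions. -/
def CstarOf (𝓐 : Set (Set S)) (X : Set V) (u : V → ℝ) (xf : (S → V) → V) :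
    Set ((Set S → ℝ) → EReal) :=
  {c | c ∈ Cscr 𝓐 ∧ ∀ f ∈ Acts 𝓐 X, minVal 𝓐 c (uAct u f) ≤ (u (xf f) : EReal)}

/-- `B*`: the maximal candidate set of reward functions. -/
def BstarOf (𝓐 : Set (Set S)) (X : Set V) (u : V → ℝ) (xf : (S → V) → V) :
    Set ((Set S → ℝ) → EReal) :=
  {b | b ∈ Cscr 𝓐 ∧ ∀ f ∈ Acts 𝓐 X, (u (xf f) : EReal) ≤ maxVal 𝓐 b (uAct u f)}

/-- `Pfam*`: the maximal family of prior sets (maxmin form). -/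
def PstarOf (𝓐 : Set (Set S)) (X : Set V) (u : V → ℝ) (xf : (S → V) → V) :
    Set (Set (Set S → ℝ)) :=
  {P | P ⊆ Δset 𝓐 ∧ P.Nonempty ∧ Convex ℝ P ∧ (@IsCompact _ (weakStar 𝓐) P) ∧
    ∀ f ∈ Acts 𝓐 X, minPVal P (uAct u f) ≤ (u (xf f) : EReal)}

/-- `Qfam*`: the maximal family of prior sets (minmax form). -/
def QstarOf (𝓐 : Set (Set S)) (X : Set V) (u : V → ℝ) (xf : (S → V) → V) :
    Set (Set (Set S → ℝ)) :=
  {Q | Q ⊆ Δset 𝓐 ∧ Q.Nonempty ∧ Convex ℝ Q ∧ (@IsCompact _ (weakStar 𝓐) Q) ∧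
    ∀ f ∈ Acts 𝓐 X, (u (xf f) : EReal) ≤ maxQVal Q (uAct u f)}

/-- `C` yields the maxmin representation of `R` with utility `u`. -/
def MaxminRep (𝓐 : Set (Set S)) (X : Set V) (R : (S → V) → (S → V) → Prop)
    (u : V → ℝ) (C : Set ((Set S → ℝ) → EReal)) : Prop :=
  ∀ f ∈ Acts 𝓐 X, ∀ g ∈ Acts 𝓐 X,
    (R f g ↔ maxminVal 𝓐 C (uAct u g) ≤ maxminVal 𝓐 C (uAct u f))

/-- All indicated maxima over `C` and minima over `Δ` are attained. -/
def MaxminAttained (𝓐 : Set (Set S)) (X : Set V) (u : V → ℝ)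
    (C : Set ((Set S → ℝ) → EReal)) : Prop :=
  ∀ f ∈ Acts 𝓐 X,
    (∀ c ∈ C, ∃ p ∈ Δset 𝓐,
      minVal 𝓐 c (uAct u f) = (fint p (uAct u f) : EReal) + c p) ∧
    ∃ c ∈ C, maxminVal 𝓐 C (uAct u f) = minVal 𝓐 c (uAct u f)

/-- `B` yields the minmax representation of `R` with utility `u`. -/
def MinmaxRep (𝓐 : Set (Set S)) (X : Set V) (R : (S → V) → (S → V) → Prop)
    (u : V → ℝ) (B : Set ((Set S → ℝ) → EReal)) : Prop :=
  ∀ f ∈ Acts 𝓐 X, ∀ g ∈ Acts 𝓐 X,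
    (R f g ↔ minmaxVal 𝓐 B (uAct u g) ≤ minmaxVal 𝓐 B (uAct u f))

/-- All indicated minima over `B` and maxima over `Δ` are attained. -/
def MinmaxAttained (𝓐 : Set (Set S)) (X : Set V) (u : V → ℝ)
    (B : Set ((Set S → ℝ) → EReal)) : Prop :=
  ∀ f ∈ Acts 𝓐 X,
    (∀ b ∈ B, ∃ q ∈ Δset 𝓐,
      maxVal 𝓐 b (uAct u f) = (fint q (uAct u f) : EReal) - b q) ∧
    ∃ b ∈ B, minmaxVal 𝓐 B (uAct u f) = maxVal 𝓐 b (uAct u f)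

/-- A family of nonempty, convex, weak*-compact subsets of `Δ`. -/
def IsPriorFamily (𝓐 : Set (Set S)) (Pfam : Set (Set (Set S → ℝ))) : Prop :=
  Pfam.Nonempty ∧ ∀ P ∈ Pfam,
    P ⊆ Δset 𝓐 ∧ P.Nonempty ∧ Convex ℝ P ∧ (@IsCompact _ (weakStar 𝓐) P)

/-- `Pfam` yields the maxmin representation of `R` with utility `u`. -/
def PRep (𝓐 : Set (Set S)) (X : Set V) (R : (S → V) → (S → V) → Prop)
    (u : V → ℝ) (Pfam : Set (Set (Set S → ℝ))) : Prop :=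
  ∀ f ∈ Acts 𝓐 X, ∀ g ∈ Acts 𝓐 X,
    (R f g ↔ maxminPVal Pfam (uAct u g) ≤ maxminPVal Pfam (uAct u f))

/-- All indicated maxima over `Pfam` and minima over `P` are attained. -/
def PAttained (𝓐 : Set (Set S)) (X : Set V) (u : V → ℝ)
    (Pfam : Set (Set (Set S → ℝ))) : Prop :=
  ∀ f ∈ Acts 𝓐 X,
    (∀ P ∈ Pfam, ∃ p ∈ P, minPVal P (uAct u f) = (fint p (uAct u f) : EReal)) ∧
    ∃ P ∈ Pfam, maxminPVal Pfam (uAct u f) = minPVal P (uAct u f)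

/-- `Qfam` yields the minmax representation of `R` with utility `u`. -/
def QRep (𝓐 : Set (Set S)) (X : Set V) (R : (S → V) → (S → V) → Prop)
    (u : V → ℝ) (Qfam : Set (Set (Set S → ℝ))) : Prop :=
  ∀ f ∈ Acts 𝓐 X, ∀ g ∈ Acts 𝓐 X,
    (R f g ↔ minmaxQVal Qfam (uAct u g) ≤ minmaxQVal Qfam (uAct u f))

/-- All indicated minima over `Qfam` and maxima over `Q` are attained. -/
def QAttained (𝓐 : Set (Set S)) (X : Set V) (u : V → ℝ)
    (Qfam : Set (Set (Set S → ℝ))) : Prop :=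
  ∀ f ∈ Acts 𝓐 X,
    (∀ Q ∈ Qfam, ∃ q ∈ Q, maxQVal Q (uAct u f) = (fint q (uAct u f) : EReal)) ∧
    ∃ Q ∈ Qfam, minmaxQVal Qfam (uAct u f) = maxQVal Q (uAct u f)

/-- `c₁ ≈_u c₂`: `c₁` and `c₂` induce the same variational functional on `B₀(Σ, u(X))`. -/
def ApproxEq (𝓐 : Set (Set S)) (X : Set V) (u : V → ℝ)
    (c₁ c₂ : (Set S → ℝ) → EReal) : Prop :=
  ∀ φ : S → ℝ, IsSimpleFn 𝓐 φ → (∀ s, φ s ∈ u '' X) →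
    minVal 𝓐 c₁ φ = minVal 𝓐 c₂ φ

/-- `R₁` is more ambiguity averse than `R₂`. -/
def MoreAmbiguityAverse (𝓐 : Set (Set S)) (X : Set V)
    (R₁ R₂ : (S → V) → (S → V) → Prop) : Prop :=
  ∀ f ∈ Acts 𝓐 X, ∀ x ∈ X, R₂ (constAct x) f → R₁ (constAct x) f

/-- `u₁` and `u₂` are positive affine transformations of each other on `X`. -/
def CardEquiv (X : Set V) (u₁ u₂ : V → ℝ) : Prop :=
  ∃ a b : ℝ, 0 < a ∧ ∀ x ∈ X, u₂ x = a * u₁ x + b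

/-- A capacity on `(S, Σ)`. -/
def IsCapacity (𝓐 : Set (Set S)) (π : Set S → ℝ) : Prop :=
  π ∅ = 0 ∧ π Set.univ = 1 ∧ ∀ A ∈ 𝓐, ∀ B ∈ 𝓐, A ⊆ B → π A ≤ π B

/-- The Choquet integral of a (simple) function against a capacity. -/
noncomputable def choquet (π : Set S → ℝ) (φ : S → ℝ) : ℝ :=
  (∫ t in Set.Ioi (0 : ℝ), π {s | t ≤ φ s}) +
    ∫ t in Set.Iio (0 : ℝ), (π {s | t ≤ φ s} - 1)

section AuxLemmas

set_option linter.unusedSectionVars false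

variable [Nonempty S]

-- ## set algebra facts
theorem IsSetAlg.univ_mem {𝓐 : Set (Set S)} (hA : IsSetAlg 𝓐) : Set.univ ∈ 𝓐 := by
  simpa using hA.compl_mem ∅ hA.empty_mem

theorem IsSetAlg.inter_mem {𝓐 : Set (Set S)} (hA : IsSetAlg 𝓐) {A B : Set S}
    (h1 : A ∈ 𝓐) (h2 : B ∈ 𝓐) : A ∩ B ∈ 𝓐 := by
  have := hA.compl_mem _ (hA.union_mem _ (hA.compl_mem _ h1) _ (hA.compl_mem _ h2))
  simpa [Set.compl_union] using this

theorem IsSetAlg.biUnion_mem {𝓐 : Set (Set S)} (hA : IsSetAlg 𝓐) {ι : Type*}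
    (F : Finset ι) (A : ι → Set S) (h : ∀ i ∈ F, A i ∈ 𝓐) : (⋃ i ∈ F, A i) ∈ 𝓐 := by
  classical
  induction F using Finset.induction_on with
  | empty => simpa using hA.empty_mem
  | @insert a F ha ih =>
      rw [Finset.set_biUnion_insert]
      exact hA.union_mem _ (h a (by simp)) _ (ih fun i hi => h i (by simp [hi]))

-- ## Δset facts
theorem Δset.empty_eq_zero {𝓐 : Set (Set S)} (hA : IsSetAlg 𝓐) {p : Set S → ℝ}
    (hp : p ∈ Δset 𝓐) : p ∅ = 0 := by
  have := hp.2.2.1 ∅ hA.empty_mem ∅ hA.empty_mem (by simp)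
  simp at this; linarith

theorem Δset.biUnion_sum {𝓐 : Set (Set S)} (hA : IsSetAlg 𝓐) {p : Set S → ℝ}
    (hp : p ∈ Δset 𝓐) {ι : Type*} (F : Finset ι) (A : ι → Set S)
    (hmem : ∀ i ∈ F, A i ∈ 𝓐)
    (hdisj : ∀ i ∈ F, ∀ j ∈ F, i ≠ j → Disjoint (A i) (A j)) :
    p (⋃ i ∈ F, A i) = ∑ i ∈ F, p (A i) := by
  classical
  induction F using Finset.induction_on with
  | empty => simpa using Δset.empty_eq_zero hA hp
  | @insert a F ha ih =>
      rw [Finset.set_biUnion_insert, Finset.sum_insert ha]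
      have hU : (⋃ i ∈ F, A i) ∈ 𝓐 := hA.biUnion_mem F A fun i hi => hmem i (by simp [hi])
      have hd : Disjoint (A a) (⋃ i ∈ F, A i) := by
        rw [Set.disjoint_iUnion₂_right]
        intro i hi
        exact hdisj a (by simp) i (by simp [hi]) (fun h => ha (h ▸ hi))
      rw [hp.2.2.1 _ (hmem a (by simp)) _ hU hd,
        ih (fun i hi => hmem i (by simp [hi]))
          (fun i hi j hj hij => hdisj i (by simp [hi]) j (by simp [hj]) hij)]

-- ## fint basics
theorem fint_of_finite {p : Set S → ℝ} {φ : S → ℝ} (h : (Set.range φ).Finite) :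
    fint p φ = ∑ t ∈ h.toFinset, t * p (φ ⁻¹' {t}) := dif_pos h

theorem fint_add_meas (p q : Set S → ℝ) (φ : S → ℝ) :
    fint (p + q) φ = fint p φ + fint q φ := by
  unfold fint
  by_cases h : (Set.range φ).Finite
  · simp [h, mul_add, Finset.sum_add_distrib]
  · simp [h]

theorem fint_smul_meas (c : ℝ) (p : Set S → ℝ) (φ : S → ℝ) :
    fint (c • p) φ = c * fint p φ := by
  unfold fint
  by_cases h : (Set.range φ).Finite
  · simp [h, Finset.mul_sum]; exact Finset.sum_congr rfl fun t _ => by ring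
  · simp [h]

theorem fint_sub_meas (p q : Set S → ℝ) (φ : S → ℝ) :
    fint (p - q) φ = fint p φ - fint q φ := by
  have : p - q = p + (-1 : ℝ) • q := by funext A; simp; ring
  rw [this, fint_add_meas, fint_smul_meas]; ring

variable [Nonempty S]

theorem fint_const (p : Set S → ℝ) (hp : p Set.univ = 1) (c : ℝ) :
    fint p (fun _ => c) = c := by
  have h : (Set.range (fun _ : S => c)).Finite := by simp [Set.range_const]
  rw [fint_of_finite h]
  have : h.toFinset = {c} := by simp [Set.range_const]
  rw [this]
  simp [Set.preimage_const_of_mem, hp]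

theorem fint_zero (p : Set S → ℝ) : fint p (0 : S → ℝ) = 0 := by
  have h : (Set.range (0 : S → ℝ)).Finite := by simp [Set.range_const]
  rw [fint_of_finite h]
  refine Finset.sum_eq_zero fun t ht => ?_
  have ht' : t = 0 := by
    rcases (Set.Finite.mem_toFinset h).1 ht with ⟨s, hs⟩
    simpa using hs.symm
  simp [ht']

theorem fint_smul_fn (p : Set S → ℝ) (c : ℝ) (φ : S → ℝ) :
    fint p (c • φ) = c * fint p φ := by
  rcases eq_or_ne c 0 with rfl | hc
  · simpa using fint_zero p
  by_cases h : (Set.range φ).Finite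
  · have h' : (Set.range (c • φ)).Finite := by
      have : Set.range (c • φ) = (fun t => c * t) '' Set.range φ := by
        ext t
        simp only [Set.mem_image, Set.mem_range, Pi.smul_apply, smul_eq_mul]
        constructor
        · rintro ⟨s, rfl⟩; exact ⟨φ s, ⟨s, rfl⟩, rfl⟩
        · rintro ⟨a, ⟨s, rfl⟩, rfl⟩; exact ⟨s, rfl⟩
      rw [this]; exact h.image _
    rw [fint_of_finite h, fint_of_finite h']
    have himg : h'.toFinset = h.toFinset.image (fun t => c * t) := by
      ext t
      simp only [Set.Finite.mem_toFinset, Finset.mem_image, Set.mem_range, Pi.smul_apply,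
        smul_eq_mul]
      constructor
      · rintro ⟨s, rfl⟩; exact ⟨φ s, ⟨s, rfl⟩, rfl⟩
      · rintro ⟨a, ⟨s, rfl⟩, rfl⟩; exact ⟨s, rfl⟩
    rw [himg, Finset.sum_image (by intro a _ b _ hab; exact mul_left_cancel₀ hc hab)]
    rw [Finset.mul_sum]
    refine Finset.sum_congr rfl fun t _ => ?_
    have : (c • φ) ⁻¹' {c * t} = φ ⁻¹' {t} := by
      ext s
      simp only [Set.mem_preimage, Set.mem_singleton_iff, Pi.smul_apply, smul_eq_mul]
      exact mul_right_inj' hc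
    rw [this]; ring
  · have h' : ¬ (Set.range (c • φ)).Finite := by
      intro hf
      apply h
      have : Set.range φ = (fun t => c⁻¹ * t) '' Set.range (c • φ) := by
        ext t
        simp only [Set.mem_image, Set.mem_range, Pi.smul_apply, smul_eq_mul]
        constructor
        · rintro ⟨s, rfl⟩; exact ⟨c * φ s, ⟨s, rfl⟩, by field_simp⟩
        · rintro ⟨a, ⟨s, rfl⟩, rfl⟩; exact ⟨s, by field_simp⟩
      rw [this]; exact hf.image _
    unfold fint; rw [dif_neg h, dif_neg h']; ring

-- ## simple function closure
theorem isSimpleFn_const {𝓐 : Set (Set S)} (hA : IsSetAlg 𝓐) (c : ℝ) :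
    IsSimpleFn 𝓐 (fun _ : S => c) := by
  constructor
  · exact (Set.finite_singleton c).subset (by rintro t ⟨s, rfl⟩; rfl)
  · intro t
    by_cases h : c = t
    · have : (fun _ : S => c) ⁻¹' {t} = Set.univ := by ext s; simp [h]
      rw [this]; exact hA.univ_mem
    · have : (fun _ : S => c) ⁻¹' {t} = ∅ := by ext s; simp [h]
      rw [this]; exact hA.empty_mem

theorem isSimpleFn_zero {𝓐 : Set (Set S)} (hA : IsSetAlg 𝓐) :
    IsSimpleFn 𝓐 (0 : S → ℝ) := isSimpleFn_const hA 0

theorem isSimpleFn_smul {𝓐 : Set (Set S)} (hA : IsSetAlg 𝓐) (c : ℝ) {φ : S → ℝ}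
    (hφ : IsSimpleFn 𝓐 φ) : IsSimpleFn 𝓐 (c • φ) := by
  rcases eq_or_ne c 0 with rfl | hc
  · have : (0 : ℝ) • φ = (fun _ : S => (0:ℝ)) := by funext s; simp
    rw [this]; exact isSimpleFn_const hA 0
  constructor
  · have : Set.range (c • φ) ⊆ (fun t => c * t) '' Set.range φ := by
      rintro t ⟨s, rfl⟩; exact ⟨φ s, ⟨s, rfl⟩, rfl⟩
    exact (hφ.1.image _).subset this
  · intro t
    have : (c • φ) ⁻¹' {t} = φ ⁻¹' {c⁻¹ * t} := by
      ext s
      simp only [Set.mem_preimage, Set.mem_singleton_iff, Pi.smul_apply, smul_eq_mul]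
      constructor
      · rintro rfl; field_simp
      · intro h; rw [h]; field_simp
    rw [this]; exact hφ.2 _

theorem isSimpleFn_add {𝓐 : Set (Set S)} (hA : IsSetAlg 𝓐) {φ ψ : S → ℝ}
    (hφ : IsSimpleFn 𝓐 φ) (hψ : IsSimpleFn 𝓐 ψ) : IsSimpleFn 𝓐 (φ + ψ) := by
  classical
  constructor
  · have : Set.range (φ + ψ) ⊆ Set.image2 (· + ·) (Set.range φ) (Set.range ψ) := by
      rintro t ⟨s, rfl⟩; exact ⟨φ s, ⟨s, rfl⟩, ψ s, ⟨s, rfl⟩, rfl⟩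
    exact (Set.Finite.image2 _ hφ.1 hψ.1).subset this
  · intro t
    have : (φ + ψ) ⁻¹' {t} = ⋃ a ∈ hφ.1.toFinset, (φ ⁻¹' {a} ∩ ψ ⁻¹' {t - a}) := by
      ext s
      simp only [Set.mem_preimage, Set.mem_singleton_iff, Pi.add_apply, Set.mem_iUnion,
        Set.mem_inter_iff, Set.Finite.mem_toFinset, Set.mem_range]
      constructor
      · intro h; exact ⟨φ s, ⟨⟨s, rfl⟩, rfl, by linarith⟩⟩
      · rintro ⟨a, _, rfl, h2⟩; linarith
    rw [this]
    exact hA.biUnion_mem _ _ fun a _ => hA.inter_mem (hφ.2 a) (hψ.2 (t - a))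

theorem isSimpleFn_sum {𝓐 : Set (Set S)} (hA : IsSetAlg 𝓐) {ι : Type*} (F : Finset ι)
    (c : ι → ℝ) (g : ι → S → ℝ) (hg : ∀ i ∈ F, IsSimpleFn 𝓐 (g i)) :
    IsSimpleFn 𝓐 (∑ i ∈ F, c i • g i) := by
  classical
  induction F using Finset.induction_on with
  | empty => simpa using isSimpleFn_zero hA
  | @insert a F ha ih =>
      rw [Finset.sum_insert ha]
      exact isSimpleFn_add hA (isSimpleFn_smul hA _ (hg a (by simp)))
        (ih fun i hi => hg i (by simp [hi]))

-- ## indicator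
open Classical in
noncomputable def chi (A : Set S) : S → ℝ := fun s => if s ∈ A then 1 else 0

theorem chi_pos {A : Set S} {s : S} (h : s ∈ A) : chi A s = 1 := by simp [chi, h]
theorem chi_neg {A : Set S} {s : S} (h : s ∉ A) : chi A s = 0 := by simp [chi, h]

theorem isSimpleFn_chi {𝓐 : Set (Set S)} (hA : IsSetAlg 𝓐) {A : Set S} (hAm : A ∈ 𝓐) :
    IsSimpleFn 𝓐 (chi A) := by
  constructor
  · refine ((Set.finite_singleton 0).insert 1).subset ?_
    rintro t ⟨s, rfl⟩
    by_cases h : s ∈ A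
    · simp [chi_pos h]
    · simp [chi_neg h]
  · intro t
    rcases eq_or_ne t 1 with rfl | h1
    · have : chi A ⁻¹' {1} = A := by
        ext s; by_cases h : s ∈ A
        · simp [chi_pos h, h]
        · simp [chi_neg h, h]
      rw [this]; exact hAm
    rcases eq_or_ne t 0 with rfl | h0
    · have : chi A ⁻¹' {0} = Aᶜ := by
        ext s; by_cases h : s ∈ A
        · simp [chi_pos h, h]
        · simp [chi_neg h, h]
      rw [this]; exact hA.compl_mem _ hAm
    · have : chi A ⁻¹' {t} = ∅ := by
        ext s; by_cases h : s ∈ A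
        · simp [chi_pos h, Ne.symm h1]
        · simp [chi_neg h, Ne.symm h0]
      rw [this]; exact hA.empty_mem

theorem fint_chi {𝓐 : Set (Set S)} (hA : IsSetAlg 𝓐) {p : Set S → ℝ} (hp : p ∈ Δset 𝓐)
    {A : Set S} (hAm : A ∈ 𝓐) : fint p (chi A) = p A := by
  classical
  have hfin := (isSimpleFn_chi hA hAm).1
  rw [fint_of_finite hfin]
  have hsub : hfin.toFinset ⊆ ({1, 0} : Finset ℝ) := by
    intro t ht
    rcases (Set.Finite.mem_toFinset hfin).1 ht with ⟨s, rfl⟩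
    by_cases h : s ∈ A
    · simp [chi_pos h]
    · simp [chi_neg h]
  have hpre1 : chi A ⁻¹' {1} = A := by
    ext s; by_cases h : s ∈ A
    · simp [chi_pos h, h]
    · simp [chi_neg h, h]
  have := Finset.sum_subset hsub (f := fun t => t * p (chi A ⁻¹' {t})) ?_
  · rw [this]
    rw [show ({1, 0} : Finset ℝ) = insert 1 {0} from rfl, Finset.sum_insert (by norm_num)]
    simp [hpre1]
  · intro t ht hnt
    have ht1 : t = 1 ∨ t = 0 := by simpa using ht
    rcases ht1 with rfl | rfl
    · -- 1 not in range: A = ∅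
      have hAe : A = ∅ := by
        by_contra hne
        rcases Set.nonempty_iff_ne_empty.2 hne with ⟨s, hs⟩
        exact hnt ((Set.Finite.mem_toFinset hfin).2 ⟨s, chi_pos hs⟩)
      show (1 : ℝ) * p (chi A ⁻¹' {1}) = 0
      rw [hpre1, hAe, Δset.empty_eq_zero hA hp]; ring
    · show (0 : ℝ) * p (chi A ⁻¹' {0}) = 0
      ring

-- ## additivity of fint in the function argument
theorem fint_add_fn {𝓐 : Set (Set S)} (hA : IsSetAlg 𝓐) {p : Set S → ℝ} (hp : p ∈ Δset 𝓐)
    {φ ψ : S → ℝ} (hφ : IsSimpleFn 𝓐 φ) (hψ : IsSimpleFn 𝓐 ψ) :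
    fint p (φ + ψ) = fint p φ + fint p ψ := by
  classical
  have hσ := isSimpleFn_add hA hφ hψ
  set Fφ := hφ.1.toFinset with hFφ
  set Fψ := hψ.1.toFinset with hFψ
  set Fσ := hσ.1.toFinset with hFσ
  set A : ℝ × ℝ → Set S := fun ab => φ ⁻¹' {ab.1} ∩ ψ ⁻¹' {ab.2} with hAdef
  have hAmem : ∀ ab : ℝ × ℝ, A ab ∈ 𝓐 := fun ab => hA.inter_mem (hφ.2 ab.1) (hψ.2 ab.2)
  have hAdisj : ∀ ab ab' : ℝ × ℝ, ab ≠ ab' → Disjoint (A ab) (A ab') := by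
    intro ab ab' hne
    rw [Set.disjoint_left]
    rintro s ⟨h1, h2⟩ ⟨h3, h4⟩
    apply hne
    simp only [Set.mem_preimage, Set.mem_singleton_iff] at h1 h2 h3 h4
    exact Prod.ext (h1.symm.trans h3) (h2.symm.trans h4)
  set R := Fφ ×ˢ Fψ with hR
  -- fint p φ in terms of the common partition
  have hphi : fint p φ = ∑ ab ∈ R, ab.1 * p (A ab) := by
    rw [fint_of_finite hφ.1, Finset.sum_product]
    refine Finset.sum_congr rfl fun a ha => ?_
    have hpre : φ ⁻¹' {a} = ⋃ b ∈ Fψ, A (a, b) := by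
      ext s
      simp only [Set.mem_preimage, Set.mem_singleton_iff, Set.mem_iUnion, hAdef,
        Set.mem_inter_iff, Set.Finite.mem_toFinset, Set.mem_range, Fψ]
      constructor
      · intro h; exact ⟨ψ s, ⟨s, rfl⟩, h, rfl⟩
      · rintro ⟨b, _, h, _⟩; exact h
    rw [hpre, Δset.biUnion_sum hA hp Fψ (fun b => A (a, b)) (fun b _ => hAmem _)
      (fun i _ j _ hij => hAdisj _ _ (by simp [hij])), Finset.mul_sum]
  have hpsi : fint p ψ = ∑ ab ∈ R, ab.2 * p (A ab) := by
    rw [fint_of_finite hψ.1, Finset.sum_product_right]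
    refine Finset.sum_congr rfl fun b hb => ?_
    have hpre : ψ ⁻¹' {b} = ⋃ a ∈ Fφ, A (a, b) := by
      ext s
      simp only [Set.mem_preimage, Set.mem_singleton_iff, Set.mem_iUnion, hAdef,
        Set.mem_inter_iff, Set.Finite.mem_toFinset, Set.mem_range, Fφ]
      constructor
      · intro h; exact ⟨φ s, ⟨s, rfl⟩, rfl, h⟩
      · rintro ⟨a, _, _, h⟩; exact h
    rw [hpre, Δset.biUnion_sum hA hp Fφ (fun a => A (a, b)) (fun a _ => hAmem _)
      (fun i _ j _ hij => hAdisj _ _ (by simp [hij])), Finset.mul_sum]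
  -- fint p (φ + ψ)
  have hsig : fint p (φ + ψ) = ∑ ab ∈ R, (ab.1 + ab.2) * p (A ab) := by
    rw [fint_of_finite hσ.1]
    have hfib : ∀ t ∈ Fσ, t * p ((φ + ψ) ⁻¹' {t})
        = ∑ ab ∈ R.filter (fun ab => ab.1 + ab.2 = t), (ab.1 + ab.2) * p (A ab) := by
      intro t ht
      have hpre : (φ + ψ) ⁻¹' {t} = ⋃ ab ∈ R.filter (fun ab => ab.1 + ab.2 = t), A ab := by
        ext s
        simp only [Set.mem_preimage, Set.mem_singleton_iff, Pi.add_apply, Set.mem_iUnion,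
          Finset.mem_filter, hAdef, Set.mem_inter_iff, hR, Finset.mem_product,
          Set.Finite.mem_toFinset, Set.mem_range, Fφ, Fψ]
        constructor
        · intro h; exact ⟨(φ s, ψ s), ⟨⟨⟨s, rfl⟩, ⟨s, rfl⟩⟩, h⟩, rfl, rfl⟩
        · rintro ⟨⟨a, b⟩, ⟨_, hab⟩, h1, h2⟩
          simp only at h1 h2 hab
          rw [h1, h2]; exact hab
      rw [hpre, Δset.biUnion_sum hA hp _ _ (fun ab _ => hAmem _)
        (fun i _ j _ hij => hAdisj _ _ hij), Finset.mul_sum]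
      refine Finset.sum_congr rfl fun ab hab => ?_
      rw [(Finset.mem_filter.1 hab).2]
    rw [Finset.sum_congr rfl hfib]
    have hmaps : ∀ ab ∈ R.filter (fun ab => (A ab).Nonempty), ab.1 + ab.2 ∈ Fσ := by
      intro ab hab
      rcases (Finset.mem_filter.1 hab).2 with ⟨s, hs1, hs2⟩
      simp only [Set.mem_preimage, Set.mem_singleton_iff] at hs1 hs2
      simp only [hFσ, Set.Finite.mem_toFinset, Set.mem_range]
      exact ⟨s, by simp [Pi.add_apply, hs1, hs2]⟩
    -- first restrict R to nonempty pieces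
    have hzero : ∀ ab ∈ R, ¬ (A ab).Nonempty → (ab.1 + ab.2) * p (A ab) = 0 := by
      intro ab _ hne
      have : A ab = ∅ := Set.not_nonempty_iff_eq_empty.1 hne
      rw [this, Δset.empty_eq_zero hA hp]; ring
    have e1 : ∑ ab ∈ R, (ab.1 + ab.2) * p (A ab)
        = ∑ ab ∈ R.filter (fun ab => (A ab).Nonempty), (ab.1 + ab.2) * p (A ab) := by
      rw [← Finset.sum_filter_add_sum_filter_not R (fun ab => (A ab).Nonempty)]
      have : ∑ ab ∈ R.filter (fun ab => ¬ (A ab).Nonempty), (ab.1 + ab.2) * p (A ab) = 0 :=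
        Finset.sum_eq_zero fun ab hab =>
          hzero ab (Finset.mem_filter.1 hab).1 (Finset.mem_filter.1 hab).2
      rw [this, add_zero]
    have e2 := Finset.sum_fiberwise_of_maps_to hmaps
      (fun ab : ℝ × ℝ => (ab.1 + ab.2) * p (A ab))
    -- each fiber over t within the nonempty-filtered set vs the full filter
    have e3 : ∀ t ∈ Fσ,
        ∑ ab ∈ R.filter (fun ab => ab.1 + ab.2 = t), (ab.1 + ab.2) * p (A ab)
        = ∑ ab ∈ (R.filter (fun ab => (A ab).Nonempty)).filter
            (fun ab => ab.1 + ab.2 = t), (ab.1 + ab.2) * p (A ab) := by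
      intro t _
      rw [Finset.filter_filter]
      symm
      apply Finset.sum_subset
      · intro ab hab
        rcases Finset.mem_filter.1 hab with ⟨hR', h2⟩
        exact Finset.mem_filter.2 ⟨hR', h2.2⟩
      · intro ab hab hnab
        rcases Finset.mem_filter.1 hab with ⟨hR', hsum⟩
        have : ¬ (A ab).Nonempty := by
          intro hne
          exact hnab (Finset.mem_filter.2 ⟨hR', hne, hsum⟩)
        exact hzero ab hR' this
    rw [Finset.sum_congr rfl e3, e2, ← e1]
  rw [hphi, hpsi, hsig, ← Finset.sum_add_distrib]
  refine Finset.sum_congr rfl fun ab _ => by ring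

-- ## span of Δset
def InSpan2 (𝓐 : Set (Set S)) (p : Set S → ℝ) : Prop :=
  ∃ (a b : ℝ) (p₁ p₂ : Set S → ℝ), p₁ ∈ Δset 𝓐 ∧ p₂ ∈ Δset 𝓐 ∧ p = a • p₁ + b • p₂

theorem fint_add_fn_span {𝓐 : Set (Set S)} (hA : IsSetAlg 𝓐) {p : Set S → ℝ}
    (hp : InSpan2 𝓐 p) {φ ψ : S → ℝ} (hφ : IsSimpleFn 𝓐 φ) (hψ : IsSimpleFn 𝓐 ψ) :
    fint p (φ + ψ) = fint p φ + fint p ψ := by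
  rcases hp with ⟨a, b, p₁, p₂, h1, h2, rfl⟩
  rw [fint_add_meas, fint_add_meas, fint_add_meas, fint_smul_meas, fint_smul_meas,
    fint_smul_meas, fint_smul_meas, fint_smul_meas, fint_smul_meas,
    fint_add_fn hA h1 hφ hψ, fint_add_fn hA h2 hφ hψ]
  ring

theorem fint_sum_fn {𝓐 : Set (Set S)} (hA : IsSetAlg 𝓐) {p : Set S → ℝ}
    (hp : InSpan2 𝓐 p) {ι : Type*} (F : Finset ι) (c : ι → ℝ) (g : ι → S → ℝ)
    (hg : ∀ i ∈ F, IsSimpleFn 𝓐 (g i)) :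
    fint p (∑ i ∈ F, c i • g i) = ∑ i ∈ F, c i * fint p (g i) := by
  classical
  induction F using Finset.induction_on with
  | empty => simpa using fint_zero p
  | @insert a F ha ih =>
      rw [Finset.sum_insert ha, Finset.sum_insert ha,
        fint_add_fn_span hA hp (isSimpleFn_smul hA _ (hg a (by simp)))
          (isSimpleFn_sum hA F c g fun i hi => hg i (by simp [hi])),
        fint_smul_fn, ih fun i hi => hg i (by simp [hi])]

theorem fint_chi_span {𝓐 : Set (Set S)} (hA : IsSetAlg 𝓐) {a b : ℝ} {p₁ p₂ : Set S → ℝ}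
    (h1 : p₁ ∈ Δset 𝓐) (h2 : p₂ ∈ Δset 𝓐) {A : Set S} (hAm : A ∈ 𝓐) :
    fint (a • p₁ + b • p₂) (chi A) = (a • p₁ + b • p₂) A := by
  rw [fint_add_meas, fint_smul_meas, fint_smul_meas, fint_chi hA h1 hAm, fint_chi hA h2 hAm]
  simp

-- injectivity on span elements
theorem span_ext {𝓐 : Set (Set S)} (hA : IsSetAlg 𝓐) {p q : Set S → ℝ}
    (hp : InSpan2 𝓐 p) (hq : InSpan2 𝓐 q)
    (h : ∀ φ : S → ℝ, IsSimpleFn 𝓐 φ → fint p φ = fint q φ) : p = q := by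
  funext A
  by_cases hAm : A ∈ 𝓐
  · obtain ⟨a, b, p₁, p₂, h1, h2, rfl⟩ := hp
    obtain ⟨a', b', q₁, q₂, h1', h2', rfl⟩ := hq
    rw [← fint_chi_span hA h1 h2 hAm, ← fint_chi_span hA h1' h2' hAm]
    exact h _ (isSimpleFn_chi hA hAm)
  · obtain ⟨a, b, p₁, p₂, h1, h2, rfl⟩ := hp
    obtain ⟨a', b', q₁, q₂, h1', h2', rfl⟩ := hq
    simp [h1.2.2.2 A hAm, h2.2.2.2 A hAm, h1'.2.2.2 A hAm, h2'.2.2.2 A hAm]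

noncomputable def Tmap (𝓐 : Set (Set S)) : (Set S → ℝ) → ({φ : S → ℝ // IsSimpleFn 𝓐 φ} → ℝ) :=
  fun p => fun φ => fint p φ.1

theorem Tmap_continuous (𝓐 : Set (Set S)) :
    @Continuous _ _ (weakStar 𝓐) _ (Tmap 𝓐) :=
  @continuous_induced_dom _ _ (Tmap 𝓐) Pi.topologicalSpace

theorem fint_continuous (𝓐 : Set (Set S)) {φ : S → ℝ} (hφ : IsSimpleFn 𝓐 φ) :
    @Continuous _ _ (weakStar 𝓐) _ (fun p => fint p φ) := by
  exact @Continuous.comp (Set S → ℝ) ({φ : S → ℝ // IsSimpleFn 𝓐 φ} → ℝ) ℝ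
    (weakStar 𝓐) _ _
    (Tmap 𝓐) (fun g : {φ : S → ℝ // IsSimpleFn 𝓐 φ} → ℝ => g ⟨φ, hφ⟩)
    (continuous_apply _) (Tmap_continuous 𝓐)

theorem exists_min_on {𝓐 : Set (Set S)} {P : Set (Set S → ℝ)}
    (hK : @IsCompact _ (weakStar 𝓐) P) (hne : P.Nonempty) {φ : S → ℝ}
    (hφ : IsSimpleFn 𝓐 φ) : ∃ p ∈ P, ∀ p' ∈ P, fint p φ ≤ fint p' φ := by
  letI : TopologicalSpace (Set S → ℝ) := weakStar 𝓐
  obtain ⟨p, hp, hmin⟩ := hK.exists_isMinOn hne ((fint_continuous 𝓐 hφ).continuousOn)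
  exact ⟨p, hp, fun p' hp' => hmin hp'⟩

theorem exists_max_on {𝓐 : Set (Set S)} {P : Set (Set S → ℝ)}
    (hK : @IsCompact _ (weakStar 𝓐) P) (hne : P.Nonempty) {φ : S → ℝ}
    (hφ : IsSimpleFn 𝓐 φ) : ∃ p ∈ P, ∀ p' ∈ P, fint p' φ ≤ fint p φ := by
  letI : TopologicalSpace (Set S → ℝ) := weakStar 𝓐
  obtain ⟨p, hp, hmax⟩ := hK.exists_isMaxOn hne ((fint_continuous 𝓐 hφ).continuousOn)
  exact ⟨p, hp, fun p' hp' => hmax hp'⟩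

-- ## continuous linear functionals on Pi are finitely supported
open Classical in
theorem pi_clm_decomp {ι : Type*} (f : ((ι → ℝ) →L[ℝ] ℝ)) :
    ∃ (F : Finset ι) (c : ι → ℝ), ∀ y : ι → ℝ, f y = ∑ i ∈ F, c i * y i := by
  classical
  have h0 : f ⁻¹' (Set.Ioo (-1 : ℝ) 1) ∈ nhds (0 : ι → ℝ) := by
    apply f.continuous.continuousAt.preimage_mem_nhds
    rw [map_zero]
    exact isOpen_Ioo.mem_nhds (by norm_num)
  rw [nhds_pi, Filter.mem_pi] at h0
  obtain ⟨I, hIfin, t, ht, hsub⟩ := h0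
  refine ⟨hIfin.toFinset, fun i => f (Pi.single i 1), fun y => ?_⟩
  set y' : ι → ℝ := ∑ i ∈ hIfin.toFinset, y i • (Pi.single i (1 : ℝ) : ι → ℝ) with hy'
  have hy'eq : ∀ j ∈ hIfin.toFinset, y' j = y j := by
    intro j hj
    rw [hy']
    rw [Finset.sum_apply]
    rw [Finset.sum_eq_single j]
    · simp
    · intro i _ hij; simp [Pi.single_apply, hij]
    · intro h; exact absurd hj h
  have hvanish : ∀ z : ι → ℝ, (∀ j ∈ hIfin.toFinset, z j = 0) → f z = 0 := by
    intro z hz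
    by_contra hfz
    set c : ℝ := 2 / |f z| with hc
    have hfzpos : 0 < |f z| := abs_pos.2 hfz
    have hmem : c • z ∈ I.pi t := by
      intro j hj
      have : z j = 0 := hz j (hIfin.mem_toFinset.2 hj)
      simp only [Pi.smul_apply, this, smul_zero]
      exact mem_of_mem_nhds (ht j)
    have hin := hsub hmem
    simp only [Set.mem_preimage, Set.mem_Ioo, _root_.map_smul, smul_eq_mul] at hin
    rw [hc] at hin
    have habs : |2 / |f z| * f z| < 1 := abs_lt.2 hin
    have heq : |2 / |f z| * f z| = 2 := by
      rw [abs_mul, abs_div, abs_two, abs_abs]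
      field_simp
    linarith
  have hsplit : f y = f y' + f (y - y') := by
    rw [← map_add]; congr 1; abel
  have : f (y - y') = 0 := by
    apply hvanish
    intro j hj
    simp [hy'eq j hj]
  rw [hsplit, this, add_zero, hy', map_sum]
  refine Finset.sum_congr rfl fun i _ => ?_
  rw [_root_.map_smul]
  simp [mul_comm]

-- ## bound for simple functions
theorem simple_bound {𝓐 : Set (Set S)} {φ : S → ℝ} (hφ : IsSimpleFn 𝓐 φ) :
    ∃ M : ℝ, 0 ≤ M ∧ ∀ s, |φ s| ≤ M := by
  classical
  obtain ⟨s₀⟩ := (inferInstance : Nonempty S)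
  have hmem : ∀ s : S, φ s ∈ hφ.1.toFinset := fun s => hφ.1.mem_toFinset.2 ⟨s, rfl⟩
  have hne : (hφ.1.toFinset.image (fun t => |t|)).Nonempty :=
    ⟨|φ s₀|, Finset.mem_image_of_mem _ (hmem s₀)⟩
  refine ⟨(hφ.1.toFinset.image (fun t => |t|)).max' hne, ?_, ?_⟩
  · exact le_trans (abs_nonneg (φ s₀)) (Finset.le_max' _ _
      (Finset.mem_image_of_mem _ (hmem s₀)))
  · intro s
    exact Finset.le_max' _ _ (Finset.mem_image_of_mem _ (hmem s))

theorem isSimpleFn_uAct {𝓐 : Set (Set S)} (hA : IsSetAlg 𝓐) {X : Set V} {u : V → ℝ}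
    {f : S → V} (hf : f ∈ Acts 𝓐 X) : IsSimpleFn 𝓐 (uAct u f) := by
  classical
  constructor
  · have : Set.range (uAct u f) ⊆ u '' Set.range f := by
      rintro t ⟨s, rfl⟩; exact ⟨f s, ⟨s, rfl⟩, rfl⟩
    exact (hf.2.1.image u).subset this
  · intro t
    have : uAct u f ⁻¹' {t}
        = ⋃ v ∈ hf.2.1.toFinset.filter (fun v => u v = t), f ⁻¹' {v} := by
      ext s
      simp only [Set.mem_preimage, Set.mem_singleton_iff, uAct, Set.mem_iUnion,
        Finset.mem_filter, Set.Finite.mem_toFinset, Set.mem_range]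
      constructor
      · intro h; exact ⟨f s, ⟨⟨s, rfl⟩, h⟩, rfl⟩
      · rintro ⟨v, ⟨_, hv⟩, rfl⟩; exact hv
    rw [this]
    exact hA.biUnion_mem _ _ fun v _ => hf.2.2 v

theorem constAct_mem {𝓐 : Set (Set S)} (hA : IsSetAlg 𝓐) {X : Set V} {x : V} (hx : x ∈ X) :
    (constAct x : S → V) ∈ Acts 𝓐 X := by
  refine ⟨fun _ => hx, ?_, ?_⟩
  · exact (Set.finite_singleton x).subset (by rintro v ⟨s, rfl⟩; rfl)
  · intro v
    by_cases h : x = v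
    · have : (constAct x : S → V) ⁻¹' {v} = Set.univ := by ext s; simp [constAct, h]
      rw [this]; exact hA.univ_mem
    · have : (constAct x : S → V) ⁻¹' {v} = ∅ := by ext s; simp [constAct, h]
      rw [this]; exact hA.empty_mem

open Classical in
theorem exists_act {𝓐 : Set (Set S)} (hA : IsSetAlg 𝓐) {X : Set V} (hX : X.Nonempty)
    {u : V → ℝ} {φ : S → ℝ} (hφ : IsSimpleFn 𝓐 φ) (hval : ∀ s, φ s ∈ u '' X) :
    ∃ f ∈ Acts 𝓐 X, uAct u f = φ := by
  set g : ℝ → V := fun t => if h : t ∈ u '' X then h.choose else hX.choose with hg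
  have hgX : ∀ t, g t ∈ X := by
    intro t
    rw [hg]
    by_cases h : t ∈ u '' X
    · simp only [dif_pos h]; exact h.choose_spec.1
    · simp only [dif_neg h]; exact hX.choose_spec
  have hgu : ∀ t ∈ u '' X, u (g t) = t := by
    intro t h
    rw [hg]; simp only [dif_pos h]; exact h.choose_spec.2
  refine ⟨fun s => g (φ s), ⟨fun s => hgX _, ?_, ?_⟩, ?_⟩
  · have : Set.range (fun s => g (φ s)) ⊆ g '' Set.range φ := by
      rintro v ⟨s, rfl⟩; exact ⟨φ s, ⟨s, rfl⟩, rfl⟩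
    exact (hφ.1.image g).subset this
  · intro v
    by_cases hv : ∃ t ∈ u '' X, g t = v
    · obtain ⟨t₀, ht₀, hgt₀⟩ := hv
      have : (fun s => g (φ s)) ⁻¹' {v} = φ ⁻¹' {t₀} := by
        ext s
        simp only [Set.mem_preimage, Set.mem_singleton_iff]
        constructor
        · intro h
          have h1 : u (g (φ s)) = u (g t₀) := by rw [h, hgt₀]
          rw [hgu _ (hval s), hgu _ ht₀] at h1
          exact h1
        · intro h; rw [h, hgt₀]
      rw [this]; exact hφ.2 _
    · have : (fun s => g (φ s)) ⁻¹' {v} = ∅ := by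
        ext s
        simp only [Set.mem_preimage, Set.mem_singleton_iff, Set.mem_empty_iff_false,
          iff_false]
        intro h
        exact hv ⟨φ s, hval s, h⟩
      rw [this]; exact hA.empty_mem
  · funext s
    exact hgu _ (hval s)

theorem coe_fint_le_maxQVal {Q : Set (Set S → ℝ)} {φ : S → ℝ} {q : Set S → ℝ}
    (hq : q ∈ Q) : ((fint q φ : ℝ) : EReal) ≤ maxQVal Q φ := by
  unfold maxQVal
  exact le_iSup₂ (f := fun q (_ : q ∈ Q) => ((fint q φ : ℝ) : EReal)) q hq


end AuxLemmas

theorem stmt14 {S V : Type*} [Nonempty S] [AddCommGroup V] [Module ℝ V]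
    (𝓐 : Set (Set S)) (hA : IsSetAlg 𝓐)
    (X : Set V) (hX : X.Nonempty) (hXc : Convex ℝ X)
    (R : (S → V) → (S → V) → Prop) (hpref : IBPref 𝓐 X R)
    (u : V → ℝ) (hu : IsNonconstAffine X u) (h0 : (0 : ℝ) ∈ interior (u '' X))
    (P₁ P₂ : Set (Set S → ℝ))
    (hP₁ : P₁ ⊆ Δset 𝓐) (hP₁n : P₁.Nonempty) (hP₁c : Convex ℝ P₁)
    (hP₁k : @IsCompact _ (weakStar 𝓐) P₁)
    (hP₂ : P₂ ⊆ Δset 𝓐) (hP₂n : P₂.Nonempty) (hP₂c : Convex ℝ P₂)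
    (hP₂k : @IsCompact _ (weakStar 𝓐) P₂)
    (α : ℝ) (hα : α ∈ Set.Icc (0 : ℝ) 1)
    (hrep : ∀ f ∈ Acts 𝓐 X, ∀ g ∈ Acts 𝓐 X,
      (R f g ↔
        (α : EReal) * minPVal P₁ (uAct u g) +
          ((1 - α : ℝ) : EReal) * maxQVal P₂ (uAct u g) ≤
        (α : EReal) * minPVal P₁ (uAct u f) +
          ((1 - α : ℝ) : EReal) * maxQVal P₂ (uAct u f)))
    (xf : (S → V) → V) (hxf : IsCE 𝓐 X R xf) :
    QstarOf 𝓐 X u xf =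
      {Q | Q ⊆ Δset 𝓐 ∧ Q.Nonempty ∧ Convex ℝ Q ∧ (@IsCompact _ (weakStar 𝓐) Q) ∧
        (1 - α) • P₂ ⊆ Q - α • P₁} := by
  classical
  -- the certainty-equivalent/value identity, with attained minima and maxima
  have hval : ∀ f ∈ Acts 𝓐 X, ∃ r₁ r₂ : ℝ,
      minPVal P₁ (uAct u f) = (r₁ : EReal) ∧ maxQVal P₂ (uAct u f) = (r₂ : EReal) ∧
      (∃ p₁ ∈ P₁, fint p₁ (uAct u f) = r₁) ∧ (∃ p₂ ∈ P₂, fint p₂ (uAct u f) = r₂) ∧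
      (∀ p ∈ P₁, r₁ ≤ fint p (uAct u f)) ∧ (∀ p ∈ P₂, fint p (uAct u f) ≤ r₂) ∧
      u (xf f) = α * r₁ + (1 - α) * r₂ := by
    intro f hf
    have hψ := isSimpleFn_uAct hA (u := u) hf
    obtain ⟨p₁, hp₁, hmin⟩ := exists_min_on hP₁k hP₁n hψ
    obtain ⟨p₂, hp₂, hmax⟩ := exists_max_on hP₂k hP₂n hψ
    have e1 : minPVal P₁ (uAct u f) = ((fint p₁ (uAct u f) : ℝ) : EReal) :=
      le_antisymm (iInf₂_le p₁ hp₁)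
        (le_iInf₂ fun p hp => EReal.coe_le_coe_iff.2 (hmin p hp))
    have e2 : maxQVal P₂ (uAct u f) = ((fint p₂ (uAct u f) : ℝ) : EReal) :=
      le_antisymm (iSup₂_le fun p hp => EReal.coe_le_coe_iff.2 (hmax p hp))
        (coe_fint_le_maxQVal hp₂)
    refine ⟨fint p₁ (uAct u f), fint p₂ (uAct u f), e1, e2,
      ⟨p₁, hp₁, rfl⟩, ⟨p₂, hp₂, rfl⟩, hmin, hmax, ?_⟩
    obtain ⟨hxX, hR1, hR2⟩ := hxf f hf
    have hcf : (constAct (xf f) : S → V) ∈ Acts 𝓐 X := constAct_mem hA hxX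
    have huc : uAct u (constAct (xf f) : S → V) = fun _ : S => u (xf f) := rfl
    have hminc : minPVal P₁ (uAct u (constAct (xf f) : S → V))
        = ((u (xf f) : ℝ) : EReal) := by
      rw [huc]
      refine le_antisymm ?_ (le_iInf₂ fun p hp => by rw [fint_const p (hP₁ hp).1])
      obtain ⟨p, hp⟩ := hP₁n
      refine le_trans (iInf₂_le p hp) ?_
      rw [fint_const p (hP₁ hp).1]
    have hmaxc : maxQVal P₂ (uAct u (constAct (xf f) : S → V))
        = ((u (xf f) : ℝ) : EReal) := by
      rw [huc]
      refine le_antisymm (iSup₂_le fun p hp => by rw [fint_const p (hP₂ hp).1]) ?_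
      obtain ⟨p, hp⟩ := hP₂n
      refine le_trans ?_ (coe_fint_le_maxQVal hp)
      rw [fint_const p (hP₂ hp).1]
    have h1 := (hrep f hf _ hcf).1 hR1
    have h2 := (hrep _ hcf f hf).1 hR2
    rw [hminc, hmaxc, e1, e2] at h1 h2
    norm_cast at h1 h2
    linarith
  ext Q
  simp only [QstarOf, Set.mem_setOf_eq]
  constructor
  · rintro ⟨hQΔ, hQn, hQc, hQk, hQineq⟩
    refine ⟨hQΔ, hQn, hQc, hQk, ?_⟩
    obtain ⟨ε, hε, hball⟩ := Metric.mem_nhds_iff.1 (mem_interior_iff_mem_nhds.1 h0)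
    intro y hy
    obtain ⟨p₂, hp₂, rfl⟩ := Set.mem_smul_set.1 hy
    by_contra hz
    -- key scalar inequality coming from Q ∈ Q*
    have hkey : ∀ ψ : S → ℝ, IsSimpleFn 𝓐 ψ → ∃ q ∈ Q, ∃ p₁ ∈ P₁,
        (1 - α) * fint p₂ ψ ≤ fint q ψ - α * fint p₁ ψ := by
      intro ψ hψ
      obtain ⟨M, hM0, hM⟩ := simple_bound hψ
      set lam := ε / (2 * (M + 1)) with hlam
      have hlampos : 0 < lam := div_pos hε (by linarith)
      have hvals : ∀ s, (lam • ψ) s ∈ u '' X := by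
        intro s
        apply hball
        rw [Metric.mem_ball, Real.dist_eq, sub_zero]
        have habs : |(lam • ψ) s| = lam * |ψ s| := by
          simp [abs_mul, abs_of_pos hlampos]
        rw [habs]
        have hle1 : lam * |ψ s| ≤ lam * M :=
          mul_le_mul_of_nonneg_left (hM s) hlampos.le
        have hle2 : lam * M < ε := by
          rw [hlam, div_mul_eq_mul_div, div_lt_iff₀ (by linarith : (0:ℝ) < 2 * (M + 1))]
          nlinarith
        linarith
      obtain ⟨f, hfA, hfu⟩ := exists_act hA hX (isSimpleFn_smul hA lam hψ) hvals
      obtain ⟨r₁, r₂, he1, he2, ⟨q₁, hq₁, hr₁⟩, _, hminP, hmaxP, hce⟩ := hval f hfA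
      have hQle := hQineq f hfA
      obtain ⟨qs, hqs, hqmax⟩ := exists_max_on hQk hQn (isSimpleFn_uAct hA hfA)
      have eQ : maxQVal Q (uAct u f) = ((fint qs (uAct u f) : ℝ) : EReal) :=
        le_antisymm (iSup₂_le fun p hp => EReal.coe_le_coe_iff.2 (hqmax p hp))
          (coe_fint_le_maxQVal hqs)
      rw [eQ] at hQle
      have hQler : u (xf f) ≤ fint qs (uAct u f) := EReal.coe_le_coe_iff.1 hQle
      rw [hce] at hQler
      rw [hfu] at hr₁ hmaxP hQler
      have hr₂' : fint p₂ (lam • ψ) ≤ r₂ := hmaxP p₂ hp₂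
      rw [fint_smul_fn] at hr₁ hr₂' hQler
      refine ⟨qs, hqs, q₁, hq₁, ?_⟩
      have hcomb : lam * ((1 - α) * fint p₂ ψ)
          ≤ lam * (fint qs ψ - α * fint q₁ ψ) := by
        have h1' : α * r₁ + (1 - α) * r₂ ≤ lam * fint qs ψ := hQler
        have h2' : (1 - α) * (lam * fint p₂ ψ) ≤ (1 - α) * r₂ :=
          mul_le_mul_of_nonneg_left hr₂' (by linarith [hα.2])
        rw [← hr₁] at h1'
        nlinarith
      exact le_of_mul_le_mul_left hcomb hlampos
    -- set up the separation argument in the product space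
    letI : TopologicalSpace (Set S → ℝ) := weakStar 𝓐
    set z := (1 - α) • p₂ with hzdef
    have hzspan : InSpan2 𝓐 z := ⟨1 - α, 0, p₂, p₂, hP₂ hp₂, hP₂ hp₂, by
      funext A; simp [hzdef]⟩
    have hTlin : ∀ q p : Set S → ℝ,
        Tmap 𝓐 (q - α • p) = Tmap 𝓐 q - α • Tmap 𝓐 p := by
      intro q p
      funext φ
      simp only [Tmap, Pi.sub_apply, Pi.smul_apply, smul_eq_mul]
      rw [fint_sub_meas, fint_smul_meas]
    set L : ((Set S → ℝ) × (Set S → ℝ)) →ₗ[ℝ] ({φ : S → ℝ // IsSimpleFn 𝓐 φ} → ℝ) :=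
      { toFun := fun qp => Tmap 𝓐 qp.1 - α • Tmap 𝓐 qp.2
        map_add' := by
          intro a b
          funext φ
          simp only [Tmap, Pi.sub_apply, Pi.smul_apply, smul_eq_mul, Pi.add_apply,
            Prod.fst_add, Prod.snd_add, fint_add_meas]
          ring
        map_smul' := by
          intro c a
          funext φ
          simp only [Tmap, Pi.sub_apply, Pi.smul_apply, smul_eq_mul, Prod.smul_fst,
            Prod.smul_snd, fint_smul_meas, RingHom.id_apply]
          ring } with hLdef
    have hTK : Tmap 𝓐 '' (Q - α • P₁) = L '' (Q ×ˢ P₁) := by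
      ext w
      constructor
      · rintro ⟨k, hk, rfl⟩
        obtain ⟨q, hq, w', hw', rfl⟩ := Set.mem_sub.1 hk
        obtain ⟨p, hp, rfl⟩ := Set.mem_smul_set.1 hw'
        exact ⟨(q, p), ⟨hq, hp⟩, (hTlin q p).symm⟩
      · rintro ⟨⟨q, p⟩, ⟨hq, hp⟩, rfl⟩
        exact ⟨q - α • p, Set.sub_mem_sub hq (Set.smul_mem_smul_set hp), hTlin q p⟩
    have hTKcompact : IsCompact (Tmap 𝓐 '' (Q - α • P₁)) := by
      rw [hTK]
      have hLcont : Continuous L := by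
        have : Continuous fun qp : (Set S → ℝ) × (Set S → ℝ) =>
            Tmap 𝓐 qp.1 - α • Tmap 𝓐 qp.2 :=
          (((Tmap_continuous 𝓐).comp continuous_fst).sub
            (((Tmap_continuous 𝓐).comp continuous_snd).const_smul α))
        exact this
      exact (hQk.prod hP₁k).image hLcont
    have hTKconvex : Convex ℝ (Tmap 𝓐 '' (Q - α • P₁)) := by
      rw [hTK]
      exact (hQc.prod hP₁c).linear_image L
    have hTKclosed : IsClosed (Tmap 𝓐 '' (Q - α • P₁)) := hTKcompact.isClosed
    have hTznot : Tmap 𝓐 z ∉ Tmap 𝓐 '' (Q - α • P₁) := by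
      rintro ⟨k, hk, hEq⟩
      apply hz
      have hkspan : InSpan2 𝓐 k := by
        obtain ⟨q, hq, w', hw', rfl⟩ := Set.mem_sub.1 hk
        obtain ⟨p, hp, rfl⟩ := Set.mem_smul_set.1 hw'
        exact ⟨1, -α, q, p, hQΔ hq, hP₁ hp, by
          funext A
          simp only [Pi.sub_apply, Pi.add_apply, Pi.smul_apply, smul_eq_mul, one_mul]
          ring⟩
      have hzk : z = k :=
        span_ext hA hzspan hkspan fun φ hφ =>
          (congrFun hEq (⟨φ, hφ⟩ : {φ : S → ℝ // IsSimpleFn 𝓐 φ})).symm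
      rw [hzk]
      exact hk
    obtain ⟨g, u₀, hlt, hgt⟩ :=
      geometric_hahn_banach_closed_point hTKconvex hTKclosed hTznot
    obtain ⟨F, c, hF⟩ := pi_clm_decomp g
    set ψ : S → ℝ := ∑ φ ∈ F, c φ • (φ : {φ : S → ℝ // IsSimpleFn 𝓐 φ}).1 with hψdef
    have hψs : IsSimpleFn 𝓐 ψ := isSimpleFn_sum hA F c _ fun φ _ => φ.2
    have hgT : ∀ p : Set S → ℝ, InSpan2 𝓐 p → g (Tmap 𝓐 p) = fint p ψ := by
      intro p hp
      rw [hF (Tmap 𝓐 p), hψdef, fint_sum_fn hA hp F c _ fun φ _ => φ.2]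
      rfl
    obtain ⟨qs, hqs, p₁s, hp₁s, hineq⟩ := hkey ψ hψs
    have hk₀K : qs - α • p₁s ∈ Q - α • P₁ :=
      Set.sub_mem_sub hqs (Set.smul_mem_smul_set hp₁s)
    have hk₀span : InSpan2 𝓐 (qs - α • p₁s) :=
      ⟨1, -α, qs, p₁s, hQΔ hqs, hP₁ hp₁s, by
        funext A
        simp only [Pi.sub_apply, Pi.add_apply, Pi.smul_apply, smul_eq_mul, one_mul]
        ring⟩
    have h1 : fint (qs - α • p₁s) ψ < u₀ := by
      have := hlt (Tmap 𝓐 (qs - α • p₁s)) ⟨_, hk₀K, rfl⟩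
      rwa [hgT _ hk₀span] at this
    have h2 : u₀ < fint z ψ := by
      have := hgt
      rwa [hgT z hzspan] at this
    have h3 : fint z ψ = (1 - α) * fint p₂ ψ := by
      rw [hzdef, fint_smul_meas]
    have h4 : fint (qs - α • p₁s) ψ = fint qs ψ - α * fint p₁s ψ := by
      rw [fint_sub_meas, fint_smul_meas]
    rw [h4] at h1
    rw [h3] at h2
    linarith
  · rintro ⟨hQΔ, hQn, hQc, hQk, hsub⟩
    refine ⟨hQΔ, hQn, hQc, hQk, ?_⟩
    intro f hf
    obtain ⟨r₁, r₂, he1, he2, _, ⟨p₂, hp₂, hr₂⟩, hminP, _, hce⟩ := hval f hf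
    have hmem : (1 - α) • p₂ ∈ Q - α • P₁ := hsub (Set.smul_mem_smul_set hp₂)
    obtain ⟨q, hq, w, hw, hqe⟩ := Set.mem_sub.1 hmem
    obtain ⟨p₁, hp₁, rfl⟩ := Set.mem_smul_set.1 hw
    have hq_eq : q = (1 - α) • p₂ + α • p₁ := by
      rw [← hqe]; abel
    have hfq : fint q (uAct u f)
        = (1 - α) * fint p₂ (uAct u f) + α * fint p₁ (uAct u f) := by
      rw [hq_eq, fint_add_meas, fint_smul_meas, fint_smul_meas]
    have hle : u (xf f) ≤ fint q (uAct u f) := by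
      rw [hce, hfq, hr₂]
      have hm := hminP p₁ hp₁
      nlinarith [mul_le_mul_of_nonneg_left hm hα.1]
    calc ((u (xf f) : ℝ) : EReal) ≤ ((fint q (uAct u f) : ℝ) : EReal) :=
        EReal.coe_le_coe_iff.2 hle
      _ ≤ maxQVal Q (uAct u f) := coe_fint_le_maxQVal hq


end Paper
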